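/- arXiv:1809.03180 — 2 statements merged into one kernel-verified Lean document; each statement's English description precedes it below -/
import Mathlib

section
/- Fix integers M ≥ N ≥ 1, parameters t, α₁,…,α_M, γ₁,…,γ_M ∈ ℂ, an element s ∈ ℂ with s² = −t, and integers 1 ≤ x₁ < ⋯ < x_N = M. For nonzero z₁,…,z_N ∈ ℂ with z_j² ≠ 1 for all j, z_j z_k ≠ 1 and z_j ≠ z_k for all j < k, and fixed w₁,…,w_N ∈ ℂ with w_j² = z_j, define F^{II}_{M,N}(z₁,…,z_N; γ₁,…,γ_M; x₁,…,x_N) = [ ∏_{j=1}^{N} w_j(1−s z_j) ∏_{1≤j<k≤N}(1+tz_jz_k)(1+tz_jz_k^{-1}) ] / [ (−1)^N ∏_{j=1}^{N}(1−z_j²) ∏_{1≤j<k≤N}(1−z_jz_k)(z_jz_k^{-1}−1) ] × Σ_{σ ∈ S_N} Σ_{τ ∈ {±1}^N} sgn(σ) (−1)^{#{j : τ_j = −1}} ∏_{j=1}^{N} ( z_{σ(j)}^{τ_{σ(j)}} + s ) · ∏_{j=1}^{N} [ ∏_{k=1}^{x_j-1}(α_k + (1-α_kγ_k) z_{σ(j)}^{τ_{σ(j)}})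 ] [ ∏_{k=x_j+1}^{M}(1 − γ_k z_{σ(j)}^{τ_{σ(j)}}) ] [ ∏_{k=1}^{M}(1 − γ_k z_{σ(j)}^{-τ_{σ(j)}}) ]. Then, with γ_M specialized to γ_M = z_N, F^{II}_{M,N}(z₁,…,z_N; γ₁,…,γ_{M-1}, z_N; x₁,…,x_N) = w_N^{-1} · ∏_{j=1}^{N}(t z_N z_j + 1) · ∏_{j=1}^{N-1}(t + z_N z_j^{-1}) · ∏_{j=1}^{M-1}((1-α_jγ_j) z_N^{-1} + α_j) · ∏_{j=1}^{M-1}(1 − γ_j z_N) · F^{II}_{M-1,N-1}(z₁,…,z_{N-1}; γ₁,…,γ_{M-1}; x₁,…,x_{N-1}), where F^{II}_{M-1,0} is interpreted as 1 (using the same w_j for j ≤ N-1). -/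
open Finset

variable {n : ℕ}

/-- `Fin n` is equivalent to the non-`last` elements of `Fin (n+1)` via `castSucc`. -/
def castSuccNeLast (n : ℕ) : Fin n ≃ {i : Fin (n + 1) // i ≠ Fin.last n} where
  toFun j := ⟨j.castSucc, (Fin.castSucc_lt_last j).ne⟩
  invFun i := i.1.castPred i.2
  left_inv j := by simp
  right_inv i := by simp [Fin.castSucc_castPred]

/-- Extend a permutation of `Fin n` to a permutation of `Fin (n+1)` fixing `last`. -/
def permExtLast (σ : Equiv.Perm (Fin n)) : Equiv.Perm (Fin (n + 1)) :=
  σ.extendDomain (castSuccNeLast n)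

@[simp] lemma permExtLast_castSucc (σ : Equiv.Perm (Fin n)) (j : Fin n) :
    permExtLast σ j.castSucc = (σ j).castSucc := by
  have h := Equiv.Perm.extendDomain_apply_subtype σ (castSuccNeLast n)
    (b := j.castSucc) (Fin.castSucc_lt_last j).ne
  exact h

@[simp] lemma permExtLast_last (σ : Equiv.Perm (Fin n)) :
    permExtLast σ (Fin.last n) = Fin.last n :=
  Equiv.Perm.extendDomain_apply_not_subtype σ (castSuccNeLast n) (by simp)

@[simp] lemma sign_permExtLast (σ : Equiv.Perm (Fin n)) :
    Equiv.Perm.sign (permExtLast σ) = Equiv.Perm.sign σ :=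
  Equiv.Perm.sign_extendDomain σ (castSuccNeLast n)

/-- Restrict a permutation of `Fin (n+1)` fixing `last` to `Fin n`. -/
def permRestr (σ : Equiv.Perm (Fin (n + 1))) (h : σ (Fin.last n) = Fin.last n) :
    Equiv.Perm (Fin n) where
  toFun j := (σ j.castSucc).castPred (fun hj => (Fin.castSucc_lt_last j).ne (σ.injective (hj.trans h.symm)))
  invFun j := (σ⁻¹ j.castSucc).castPred (fun hj => (Fin.castSucc_lt_last j).ne
    (σ⁻¹.injective (hj.trans (((Equiv.Perm.inv_eq_iff_eq).mpr h.symm)).symm)))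
  left_inv j := by simp [Fin.castSucc_castPred]
  right_inv j := by simp [Fin.castSucc_castPred]

lemma permExtLast_permRestr (σ : Equiv.Perm (Fin (n + 1))) (h : σ (Fin.last n) = Fin.last n) :
    permExtLast (permRestr σ h) = σ := by
  ext i
  cases i using Fin.lastCases with
  | last => simp [h]
  | cast j => simp [permRestr, Fin.castSucc_castPred]

lemma permRestr_permExtLast (σ : Equiv.Perm (Fin n)) (h : permExtLast σ (Fin.last n) = Fin.last n) :
    permRestr (permExtLast σ) h = σ := by
  ext j
  simp [permRestr]

lemma sum_perm_fix_last {β : Type*} [AddCommMonoid β] (f : Equiv.Perm (Fin (n + 1)) → β)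
    (h0 : ∀ σ, σ (Fin.last n) ≠ Fin.last n → f σ = 0) :
    ∑ σ : Equiv.Perm (Fin (n + 1)), f σ = ∑ σ : Equiv.Perm (Fin n), f (permExtLast σ) := by
  classical
  rw [← Finset.sum_filter_of_ne (p := fun σ => σ (Fin.last n) = Fin.last n)
    (fun σ _ hσ => by by_contra hc; exact hσ (h0 σ hc))]
  refine Finset.sum_bij' (fun σ hσ => permRestr σ (by simpa using hσ))
    (fun σ _ => permExtLast σ) (fun _ _ => Finset.mem_univ _)
    (fun σ _ => by simp) (fun σ hσ => permExtLast_permRestr σ (by simpa using hσ))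
    (fun σ _ => permRestr_permExtLast σ (by simp)) ?_
  intro σ hσ
  rw [permExtLast_permRestr σ (by simpa using hσ)]

lemma sum_bool_snoc {β : Type*} [AddCommMonoid β] (g : (Fin (n + 1) → Bool) → β)
    (h0 : ∀ τ, τ (Fin.last n) = true → g τ = 0) :
    ∑ τ : Fin (n + 1) → Bool, g τ = ∑ τ : Fin n → Bool, g (Fin.snoc τ false) := by
  classical
  rw [← Equiv.sum_comp (Fin.snocEquiv (fun _ => Bool)) g, Fintype.sum_prod_type,
    Fintype.sum_bool]
  have hse : ∀ (b : Bool) (τ : Fin n → Bool),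
      (Fin.snocEquiv fun _ => Bool) (b, τ) = (Fin.snoc τ b : Fin (n + 1) → Bool) :=
    fun _ _ => rfl
  have h1 : ∑ τ : Fin n → Bool, g ((Fin.snocEquiv fun _ => Bool) (true, τ)) = 0 :=
    Finset.sum_eq_zero fun τ _ => h0 _ (by rw [hse]; simp)
  rw [h1, zero_add]
  exact Finset.sum_congr rfl fun τ _ => by rw [hse]

lemma card_filter_snoc_false (τ : Fin n → Bool) :
    (Finset.univ.filter (fun j : Fin (n + 1) => (Fin.snoc τ false : Fin (n + 1) → Bool) j = false)).card
      = (Finset.univ.filter (fun j : Fin n => τ j = false)).card + 1 := by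
  classical
  rw [Finset.card_filter, Finset.card_filter, Fin.sum_univ_castSucc]
  simp

lemma prod_Ioi_castSucc (g : Fin (n + 1) → ℂ) (j : Fin n) :
    ∏ k ∈ Ioi j.castSucc, g k = (∏ k ∈ Ioi j, g k.castSucc) * g (Fin.last n) := by
  classical
  have hset : (Ioi j.castSucc : Finset (Fin (n + 1)))
      = insert (Fin.last n) ((Ioi j).map Fin.castSuccEmb) := by
    ext k
    cases k using Fin.lastCases with
    | last => simp [Fin.castSucc_lt_last]
    | cast i =>
      simp only [Finset.mem_Ioi, Finset.mem_insert, Finset.mem_map,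
        Fin.castSucc_lt_castSucc_iff]
      constructor
      · intro hlt
        exact Or.inr ⟨i, hlt, rfl⟩
      · rintro (h | ⟨a, ha, h⟩)
        · exact absurd h (Fin.castSucc_lt_last i).ne
        · have : a = i := Fin.castSucc_injective n h
          exact this ▸ ha
  rw [hset, Finset.prod_insert (by
      simp only [Finset.mem_map, not_exists, not_and]
      intro a _ h
      exact (Fin.castSucc_lt_last a).ne h),
    Finset.prod_map]
  simp only [Fin.coe_castSuccEmb]
  rw [mul_comm]

lemma prod2_split (g : Fin (n + 1) → Fin (n + 1) → ℂ) :
    ∏ j, ∏ k ∈ Ioi j, g j k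
      = (∏ j : Fin n, ∏ k ∈ Ioi j, g j.castSucc k.castSucc) *
        ∏ j : Fin n, g j.castSucc (Fin.last n) := by
  classical
  rw [Fin.prod_univ_castSucc]
  have hlast : (Ioi (Fin.last n) : Finset (Fin (n + 1))) = ∅ := by
    ext k; simp [(Fin.le_last k).not_gt]
  rw [hlast, Finset.prod_empty, mul_one, ← Finset.prod_mul_distrib]
  exact Finset.prod_congr rfl fun j _ => prod_Ioi_castSucc (g j.castSucc) j

/-- The explicit sum formula `F^{II}_{M,N}` (equation (95) of the paper): the product of the
type II prefactor and the generalized Bump–Friedberg–Hoffstein Whittaker function `o^+_λ`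
with `λ_j = x_{N-j+1} - N + j - 1`.  Here `s` plays the role of `√(-t)` and `w j` that of
`z_j^{1/2}`.  Variables `z`, square roots `w` and particle positions `x` are 0-indexed;
parameter families `α, γ` are functions on `ℕ` (indices `1,…,M` are used).  The sign choice
`τ` is encoded by booleans: `τ j = true` stands for `τ_j = +1`, `τ j = false` for `τ_j = -1`. -/
noncomputable def FII (M : ℕ) (t s : ℂ) (α γ : ℕ → ℂ) {N : ℕ} (x : Fin N → ℕ)
    (z w : Fin N → ℂ) : ℂ :=
  ((∏ j, w j * (1 - s * z j)) *
      ∏ j, ∏ k ∈ Ioi j, (1 + t * z j * z k) * (1 + t * z j * (z k)⁻¹)) /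
  ((-1 : ℂ) ^ N * (∏ j, (1 - z j ^ 2)) *
      ∏ j, ∏ k ∈ Ioi j, (1 - z j * z k) * (z j * (z k)⁻¹ - 1)) *
  ∑ σ : Equiv.Perm (Fin N), ∑ τ : Fin N → Bool,
    ((Equiv.Perm.sign σ : ℤ) : ℂ) *
    (-1 : ℂ) ^ (Finset.univ.filter (fun j => τ j = false)).card *
    (∏ j, ((if τ (σ j) then z (σ j) else (z (σ j))⁻¹) + s)) *
    ∏ j,
      ((∏ k ∈ Finset.Icc 1 (x j - 1),
          (α k + (1 - α k * γ k) * (if τ (σ j) then z (σ j) else (z (σ j))⁻¹))) *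
       (∏ k ∈ Finset.Icc (x j + 1) M,
          (1 - γ k * (if τ (σ j) then z (σ j) else (z (σ j))⁻¹))) *
       (∏ k ∈ Finset.Icc 1 M,
          (1 - γ k * (if τ (σ j) then (z (σ j))⁻¹ else z (σ j)))))

/-- Izergin–Korepin recursion, Property (3) for `x_N = M`, in the proof of
Theorem 6.5: the specialization `γ_M = z_N` of `F^{II}_{M,N}` factorizes through
`F^{II}_{M-1,N-1}`.  Here `M = m+1`, `N = n+1`, so `F^{II}_{M-1,N-1}` is `FII m` on the
first `n` variables/positions (interpreted as `1` when `n = 0`, with the same `w_j`). -/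
theorem FII_IzerginKorepin_recursion (m n : ℕ) (hmn : n ≤ m) (t s : ℂ) (hs : s ^ 2 = -t)
    (α γ : ℕ → ℂ)
    (x : Fin (n + 1) → ℕ) (hx : StrictMono x) (hx1 : ∀ j, 1 ≤ x j)
    (hxM : x (Fin.last n) = m + 1)
    (z w : Fin (n + 1) → ℂ) (hz0 : ∀ j, z j ≠ 0) (hz1 : ∀ j, z j ^ 2 ≠ 1)
    (hzz : ∀ j k, j < k → z j * z k ≠ 1) (hzne : ∀ j k, j < k → z j ≠ z k)
    (hw : ∀ j, w j ^ 2 = z j) :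
    FII (m + 1) t s α (Function.update γ (m + 1) (z (Fin.last n))) x z w
      = (w (Fin.last n))⁻¹ *
        (∏ j, (t * z (Fin.last n) * z j + 1)) *
        (∏ j : Fin n, (t + z (Fin.last n) * (z j.castSucc)⁻¹)) *
        (∏ j ∈ Finset.Icc 1 m, ((1 - α j * γ j) * (z (Fin.last n))⁻¹ + α j)) *
        (∏ j ∈ Finset.Icc 1 m, (1 - γ j * z (Fin.last n))) *
        FII m t s α γ (fun j : Fin n => x j.castSucc) (fun j : Fin n => z j.castSucc)
          (fun j : Fin n => w j.castSucc) := by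
  classical
  have hZ0 : z (Fin.last n) ≠ 0 := hz0 _
  have hZZ : z (Fin.last n) * (z (Fin.last n))⁻¹ = 1 := mul_inv_cancel₀ hZ0
  have hxle : ∀ j : Fin n, x j.castSucc ≤ m := fun j => by
    have h := hx (Fin.castSucc_lt_last j)
    rw [hxM] at h; omega
  have hupd : ∀ k, k ≤ m → Function.update γ (m + 1) (z (Fin.last n)) k = γ k :=
    fun k hk => Function.update_of_ne (by omega) _ _
  have hupdM : Function.update γ (m + 1) (z (Fin.last n)) (m + 1) = z (Fin.last n) := Function.update_self _ _ _
  have hIccIns : ∀ X : ℕ, X ≤ m + 1 →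
      Finset.Icc X (m + 1) = insert (m + 1) (Finset.Icc X m) := by
    intro X hX
    ext k
    simp only [Finset.mem_Icc, Finset.mem_insert]
    omega
  have hsplit : ∀ (X : ℕ), X ≤ m + 1 → ∀ ζ : ℂ,
      ∏ k ∈ Finset.Icc X (m + 1), (1 - Function.update γ (m + 1) (z (Fin.last n)) k * ζ)
        = (∏ k ∈ Finset.Icc X m, (1 - γ k * ζ)) * (1 - z (Fin.last n) * ζ) := by
    intro X hX ζ
    rw [hIccIns X hX, Finset.prod_insert (by simp only [Finset.mem_Icc]; omega), hupdM,
      mul_comm]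
    congr 1
    exact Finset.prod_congr rfl fun k hk => by
      rw [hupd k (Finset.mem_Icc.mp hk).2]
  have hAeq : ∀ (b : ℕ), b ≤ m → ∀ ζ : ℂ,
      ∏ k ∈ Finset.Icc 1 b, (α k + (1 - α k * Function.update γ (m + 1) (z (Fin.last n)) k) * ζ)
        = ∏ k ∈ Finset.Icc 1 b, (α k + (1 - α k * γ k) * ζ) := by
    intro b hb ζ
    exact Finset.prod_congr rfl fun k hk => by
      rw [hupd k (le_trans (Finset.mem_Icc.mp hk).2 hb)]
  -- vanishing of terms with τ (last) = true
  have hvan1 : ∀ (σ : Equiv.Perm (Fin (n + 1))) (τ : Fin (n + 1) → Bool),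
      τ (Fin.last n) = true →
      (((Equiv.Perm.sign σ : ℤ) : ℂ) *
      (-1 : ℂ) ^ (Finset.univ.filter (fun j => τ j = false)).card *
      (∏ j : Fin (n + 1), ((if τ (σ j) = true then z (σ j) else (z (σ j))⁻¹) + s)) *
      ∏ j : Fin (n + 1),
        ((∏ k ∈ Finset.Icc 1 (x j - 1), (α k + (1 - α k * Function.update γ (m + 1) (z (Fin.last n)) k) * (if τ (σ j) = true then z (σ j) else (z (σ j))⁻¹))) *
         (∏ k ∈ Finset.Icc (x j + 1) (m + 1), (1 - Function.update γ (m + 1) (z (Fin.last n)) k * (if τ (σ j) = true then z (σ j) else (z (σ j))⁻¹))) *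
         (∏ k ∈ Finset.Icc 1 (m + 1), (1 - Function.update γ (m + 1) (z (Fin.last n)) k * (if τ (σ j) = true then (z (σ j))⁻¹ else z (σ j)))))) = 0 := by
    intro σ τ hτ
    refine mul_eq_zero_of_right _ ?_
    refine Finset.prod_eq_zero (Finset.mem_univ (σ⁻¹ (Fin.last n))) ?_
    refine mul_eq_zero_of_right _ ?_
    refine Finset.prod_eq_zero (i := m + 1) (Finset.mem_Icc.mpr ⟨by omega, le_rfl⟩) ?_
    rw [(show σ (σ⁻¹ (Fin.last n)) = Fin.last n from σ.apply_symm_apply _), hupdM, hτ, if_pos rfl, hZZ, sub_self]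
  -- vanishing of terms with σ (last) ≠ last (given τ (last) = false)
  have hvan2 : ∀ (σ : Equiv.Perm (Fin (n + 1))) (τ : Fin n → Bool),
      σ (Fin.last n) ≠ Fin.last n →
      (((Equiv.Perm.sign σ : ℤ) : ℂ) *
      (-1 : ℂ) ^ (Finset.univ.filter (fun j => (Fin.snoc τ false : Fin (n + 1) → Bool) j = false)).card *
      (∏ j : Fin (n + 1), ((if (Fin.snoc τ false : Fin (n + 1) → Bool) (σ j) = true then z (σ j) else (z (σ j))⁻¹) + s)) *
      ∏ j : Fin (n + 1),
        ((∏ k ∈ Finset.Icc 1 (x j - 1), (α k + (1 - α k * Function.update γ (m + 1) (z (Fin.last n)) k) * (if (Fin.snoc τ false : Fin (n + 1) → Bool) (σ j) = true then z (σ j) else (z (σ j))⁻¹))) *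
         (∏ k ∈ Finset.Icc (x j + 1) (m + 1), (1 - Function.update γ (m + 1) (z (Fin.last n)) k * (if (Fin.snoc τ false : Fin (n + 1) → Bool) (σ j) = true then z (σ j) else (z (σ j))⁻¹))) *
         (∏ k ∈ Finset.Icc 1 (m + 1), (1 - Function.update γ (m + 1) (z (Fin.last n)) k * (if (Fin.snoc τ false : Fin (n + 1) → Bool) (σ j) = true then (z (σ j))⁻¹ else z (σ j)))))) = 0 := by
    intro σ τ hσ
    have hj0 : σ⁻¹ (Fin.last n) ≠ Fin.last n := fun h => hσ (by
      have h2 := (show σ (σ⁻¹ (Fin.last n)) = Fin.last n from σ.apply_symm_apply _)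
      rwa [h] at h2)
    have hlt : σ⁻¹ (Fin.last n) < Fin.last n := Fin.lt_last_iff_ne_last.mpr hj0
    have hxj : x (σ⁻¹ (Fin.last n)) ≤ m := by
      have h := hx hlt; rw [hxM] at h; omega
    refine mul_eq_zero_of_right _ ?_
    refine Finset.prod_eq_zero (Finset.mem_univ (σ⁻¹ (Fin.last n))) ?_
    refine mul_eq_zero_of_left (mul_eq_zero_of_right _ ?_) _
    refine Finset.prod_eq_zero (i := m + 1) (Finset.mem_Icc.mpr ⟨by omega, le_rfl⟩) ?_
    rw [(show σ (σ⁻¹ (Fin.last n)) = Fin.last n from σ.apply_symm_apply _), hupdM, Fin.snoc_last, if_neg (by simp), hZZ, sub_self]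
  -- the term-by-term identity
  have hterm : ∀ (σ : Equiv.Perm (Fin n)) (τ : Fin n → Bool),
      (((Equiv.Perm.sign (permExtLast σ) : ℤ) : ℂ) *
      (-1 : ℂ) ^ (Finset.univ.filter (fun j => (Fin.snoc τ false : Fin (n + 1) → Bool) j = false)).card *
      (∏ j : Fin (n + 1), ((if (Fin.snoc τ false : Fin (n + 1) → Bool) ((permExtLast σ) j) = true then z ((permExtLast σ) j) else (z ((permExtLast σ) j))⁻¹) + s)) *
      ∏ j : Fin (n + 1),
        ((∏ k ∈ Finset.Icc 1 (x j - 1), (α k + (1 - α k * Function.update γ (m + 1) (z (Fin.last n)) k) * (if (Fin.snoc τ false : Fin (n + 1) → Bool) ((permExtLast σ) j) = true then z ((permExtLast σ) j) else (z ((permExtLast σ) j))⁻¹))) *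
         (∏ k ∈ Finset.Icc (x j + 1) (m + 1), (1 - Function.update γ (m + 1) (z (Fin.last n)) k * (if (Fin.snoc τ false : Fin (n + 1) → Bool) ((permExtLast σ) j) = true then z ((permExtLast σ) j) else (z ((permExtLast σ) j))⁻¹))) *
         (∏ k ∈ Finset.Icc 1 (m + 1), (1 - Function.update γ (m + 1) (z (Fin.last n)) k * (if (Fin.snoc τ false : Fin (n + 1) → Bool) ((permExtLast σ) j) = true then (z ((permExtLast σ) j))⁻¹ else z ((permExtLast σ) j))))))
        = (-((z (Fin.last n))⁻¹ + s) * (1 - z (Fin.last n) * z (Fin.last n)) *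
      (∏ k ∈ Finset.Icc 1 m, (α k + (1 - α k * γ k) * (z (Fin.last n))⁻¹)) *
      (∏ k ∈ Finset.Icc 1 m, (1 - γ k * z (Fin.last n))) *
      ∏ j : Fin n, ((1 - z (Fin.last n) * z j.castSucc) * (1 - z (Fin.last n) * (z j.castSucc)⁻¹))) * (((Equiv.Perm.sign σ : ℤ) : ℂ) *
      (-1 : ℂ) ^ (Finset.univ.filter (fun j => τ j = false)).card *
      (∏ j : Fin n, ((if τ (σ j) = true then z (σ j).castSucc else (z (σ j).castSucc)⁻¹) + s)) *
      ∏ j : Fin n,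
        ((∏ k ∈ Finset.Icc 1 (x j.castSucc - 1), (α k + (1 - α k * γ k) * (if τ (σ j) = true then z (σ j).castSucc else (z (σ j).castSucc)⁻¹))) *
         (∏ k ∈ Finset.Icc (x j.castSucc + 1) m, (1 - γ k * (if τ (σ j) = true then z (σ j).castSucc else (z (σ j).castSucc)⁻¹))) *
         (∏ k ∈ Finset.Icc 1 m, (1 - γ k * (if τ (σ j) = true then (z (σ j).castSucc)⁻¹ else z (σ j).castSucc))))) := by
    intro σ τ
    rw [sign_permExtLast, card_filter_snoc_false, pow_succ]
    simp only [Fin.prod_univ_castSucc, permExtLast_castSucc, permExtLast_last,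
      Fin.snoc_castSucc, Fin.snoc_last, Bool.false_eq_true, if_false]
    rw [hxM]
    simp only [Nat.add_sub_cancel]
    rw [Finset.Icc_eq_empty (by omega : ¬(m + 1 + 1 ≤ m + 1)), Finset.prod_empty,
      hsplit 1 (by omega), hAeq m le_rfl]
    have hP2 : (∏ j : Fin n,
        ((∏ k ∈ Finset.Icc 1 (x j.castSucc - 1),
            (α k + (1 - α k * Function.update γ (m + 1) (z (Fin.last n)) k) * (if τ (σ j) = true then z (σ j).castSucc else (z (σ j).castSucc)⁻¹))) *
         (∏ k ∈ Finset.Icc (x j.castSucc + 1) (m + 1), (1 - Function.update γ (m + 1) (z (Fin.last n)) k * (if τ (σ j) = true then z (σ j).castSucc else (z (σ j).castSucc)⁻¹))) *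
         (∏ k ∈ Finset.Icc 1 (m + 1), (1 - Function.update γ (m + 1) (z (Fin.last n)) k * (if τ (σ j) = true then (z (σ j).castSucc)⁻¹ else z (σ j).castSucc)))))
      = (∏ j : Fin n,
        ((∏ k ∈ Finset.Icc 1 (x j.castSucc - 1), (α k + (1 - α k * γ k) * (if τ (σ j) = true then z (σ j).castSucc else (z (σ j).castSucc)⁻¹))) *
         (∏ k ∈ Finset.Icc (x j.castSucc + 1) m, (1 - γ k * (if τ (σ j) = true then z (σ j).castSucc else (z (σ j).castSucc)⁻¹))) *
         (∏ k ∈ Finset.Icc 1 m, (1 - γ k * (if τ (σ j) = true then (z (σ j).castSucc)⁻¹ else z (σ j).castSucc))))) *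
        ∏ j : Fin n, ((1 - z (Fin.last n) * z j.castSucc) * (1 - z (Fin.last n) * (z j.castSucc)⁻¹)) := by
      rw [← Equiv.prod_comp σ
          (fun k => (1 - z (Fin.last n) * z k.castSucc) * (1 - z (Fin.last n) * (z k.castSucc)⁻¹)),
        ← Finset.prod_mul_distrib]
      refine Finset.prod_congr rfl fun j _ => ?_
      rw [hAeq _ (by have := hxle j; omega) _, hsplit _ (by have := hxle j; omega) _,
        hsplit 1 (by omega) _]
      cases hb : τ (σ j) <;> simp only [hb, Bool.false_eq_true, if_false, if_true] <;> ring
    rw [hP2]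
    ring
  have key : (∑ σ : Equiv.Perm (Fin (n + 1)), ∑ τ : Fin (n + 1) → Bool, ((Equiv.Perm.sign σ : ℤ) : ℂ) *
      (-1 : ℂ) ^ (Finset.univ.filter (fun j => τ j = false)).card *
      (∏ j : Fin (n + 1), ((if τ (σ j) = true then z (σ j) else (z (σ j))⁻¹) + s)) *
      ∏ j : Fin (n + 1),
        ((∏ k ∈ Finset.Icc 1 (x j - 1), (α k + (1 - α k * Function.update γ (m + 1) (z (Fin.last n)) k) * (if τ (σ j) = true then z (σ j) else (z (σ j))⁻¹))) *
         (∏ k ∈ Finset.Icc (x j + 1) (m + 1), (1 - Function.update γ (m + 1) (z (Fin.last n)) k * (if τ (σ j) = true then z (σ j) else (z (σ j))⁻¹))) *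
         (∏ k ∈ Finset.Icc 1 (m + 1), (1 - Function.update γ (m + 1) (z (Fin.last n)) k * (if τ (σ j) = true then (z (σ j))⁻¹ else z (σ j))))))
      = (-((z (Fin.last n))⁻¹ + s) * (1 - z (Fin.last n) * z (Fin.last n)) *
      (∏ k ∈ Finset.Icc 1 m, (α k + (1 - α k * γ k) * (z (Fin.last n))⁻¹)) *
      (∏ k ∈ Finset.Icc 1 m, (1 - γ k * z (Fin.last n))) *
      ∏ j : Fin n, ((1 - z (Fin.last n) * z j.castSucc) * (1 - z (Fin.last n) * (z j.castSucc)⁻¹))) * ∑ σ : Equiv.Perm (Fin n), ∑ τ : Fin n → Bool, ((Equiv.Perm.sign σ : ℤ) : ℂ) *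
      (-1 : ℂ) ^ (Finset.univ.filter (fun j => τ j = false)).card *
      (∏ j : Fin n, ((if τ (σ j) = true then z (σ j).castSucc else (z (σ j).castSucc)⁻¹) + s)) *
      ∏ j : Fin n,
        ((∏ k ∈ Finset.Icc 1 (x j.castSucc - 1), (α k + (1 - α k * γ k) * (if τ (σ j) = true then z (σ j).castSucc else (z (σ j).castSucc)⁻¹))) *
         (∏ k ∈ Finset.Icc (x j.castSucc + 1) m, (1 - γ k * (if τ (σ j) = true then z (σ j).castSucc else (z (σ j).castSucc)⁻¹))) *
         (∏ k ∈ Finset.Icc 1 m, (1 - γ k * (if τ (σ j) = true then (z (σ j).castSucc)⁻¹ else z (σ j).castSucc)))) := by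
    have step1 : (∑ σ : Equiv.Perm (Fin (n + 1)), ∑ τ : Fin (n + 1) → Bool, ((Equiv.Perm.sign σ : ℤ) : ℂ) *
      (-1 : ℂ) ^ (Finset.univ.filter (fun j => τ j = false)).card *
      (∏ j : Fin (n + 1), ((if τ (σ j) = true then z (σ j) else (z (σ j))⁻¹) + s)) *
      ∏ j : Fin (n + 1),
        ((∏ k ∈ Finset.Icc 1 (x j - 1), (α k + (1 - α k * Function.update γ (m + 1) (z (Fin.last n)) k) * (if τ (σ j) = true then z (σ j) else (z (σ j))⁻¹))) *
         (∏ k ∈ Finset.Icc (x j + 1) (m + 1), (1 - Function.update γ (m + 1) (z (Fin.last n)) k * (if τ (σ j) = true then z (σ j) else (z (σ j))⁻¹))) *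
         (∏ k ∈ Finset.Icc 1 (m + 1), (1 - Function.update γ (m + 1) (z (Fin.last n)) k * (if τ (σ j) = true then (z (σ j))⁻¹ else z (σ j))))))
        = ∑ σ : Equiv.Perm (Fin (n + 1)), ∑ τ : Fin n → Bool, ((Equiv.Perm.sign σ : ℤ) : ℂ) *
      (-1 : ℂ) ^ (Finset.univ.filter (fun j => (Fin.snoc τ false : Fin (n + 1) → Bool) j = false)).card *
      (∏ j : Fin (n + 1), ((if (Fin.snoc τ false : Fin (n + 1) → Bool) (σ j) = true then z (σ j) else (z (σ j))⁻¹) + s)) *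
      ∏ j : Fin (n + 1),
        ((∏ k ∈ Finset.Icc 1 (x j - 1), (α k + (1 - α k * Function.update γ (m + 1) (z (Fin.last n)) k) * (if (Fin.snoc τ false : Fin (n + 1) → Bool) (σ j) = true then z (σ j) else (z (σ j))⁻¹))) *
         (∏ k ∈ Finset.Icc (x j + 1) (m + 1), (1 - Function.update γ (m + 1) (z (Fin.last n)) k * (if (Fin.snoc τ false : Fin (n + 1) → Bool) (σ j) = true then z (σ j) else (z (σ j))⁻¹))) *
         (∏ k ∈ Finset.Icc 1 (m + 1), (1 - Function.update γ (m + 1) (z (Fin.last n)) k * (if (Fin.snoc τ false : Fin (n + 1) → Bool) (σ j) = true then (z (σ j))⁻¹ else z (σ j))))) :=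
      Finset.sum_congr rfl fun σ _ => sum_bool_snoc _ (hvan1 σ)
    rw [step1, Finset.sum_comm]
    have step2 : (∑ τ : Fin n → Bool, ∑ σ : Equiv.Perm (Fin (n + 1)), ((Equiv.Perm.sign σ : ℤ) : ℂ) *
      (-1 : ℂ) ^ (Finset.univ.filter (fun j => (Fin.snoc τ false : Fin (n + 1) → Bool) j = false)).card *
      (∏ j : Fin (n + 1), ((if (Fin.snoc τ false : Fin (n + 1) → Bool) (σ j) = true then z (σ j) else (z (σ j))⁻¹) + s)) *
      ∏ j : Fin (n + 1),
        ((∏ k ∈ Finset.Icc 1 (x j - 1), (α k + (1 - α k * Function.update γ (m + 1) (z (Fin.last n)) k) * (if (Fin.snoc τ false : Fin (n + 1) → Bool) (σ j) = true then z (σ j) else (z (σ j))⁻¹))) *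
         (∏ k ∈ Finset.Icc (x j + 1) (m + 1), (1 - Function.update γ (m + 1) (z (Fin.last n)) k * (if (Fin.snoc τ false : Fin (n + 1) → Bool) (σ j) = true then z (σ j) else (z (σ j))⁻¹))) *
         (∏ k ∈ Finset.Icc 1 (m + 1), (1 - Function.update γ (m + 1) (z (Fin.last n)) k * (if (Fin.snoc τ false : Fin (n + 1) → Bool) (σ j) = true then (z (σ j))⁻¹ else z (σ j))))))
        = ∑ τ : Fin n → Bool, ∑ σ : Equiv.Perm (Fin n), ((Equiv.Perm.sign (permExtLast σ) : ℤ) : ℂ) *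
      (-1 : ℂ) ^ (Finset.univ.filter (fun j => (Fin.snoc τ false : Fin (n + 1) → Bool) j = false)).card *
      (∏ j : Fin (n + 1), ((if (Fin.snoc τ false : Fin (n + 1) → Bool) ((permExtLast σ) j) = true then z ((permExtLast σ) j) else (z ((permExtLast σ) j))⁻¹) + s)) *
      ∏ j : Fin (n + 1),
        ((∏ k ∈ Finset.Icc 1 (x j - 1), (α k + (1 - α k * Function.update γ (m + 1) (z (Fin.last n)) k) * (if (Fin.snoc τ false : Fin (n + 1) → Bool) ((permExtLast σ) j) = true then z ((permExtLast σ) j) else (z ((permExtLast σ) j))⁻¹))) *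
         (∏ k ∈ Finset.Icc (x j + 1) (m + 1), (1 - Function.update γ (m + 1) (z (Fin.last n)) k * (if (Fin.snoc τ false : Fin (n + 1) → Bool) ((permExtLast σ) j) = true then z ((permExtLast σ) j) else (z ((permExtLast σ) j))⁻¹))) *
         (∏ k ∈ Finset.Icc 1 (m + 1), (1 - Function.update γ (m + 1) (z (Fin.last n)) k * (if (Fin.snoc τ false : Fin (n + 1) → Bool) ((permExtLast σ) j) = true then (z ((permExtLast σ) j))⁻¹ else z ((permExtLast σ) j))))) :=
      Finset.sum_congr rfl fun τ _ => sum_perm_fix_last _ (fun σ hσ => hvan2 σ τ hσ)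
    rw [step2]
    have step3 : (∑ τ : Fin n → Bool, ∑ σ : Equiv.Perm (Fin n), ((Equiv.Perm.sign (permExtLast σ) : ℤ) : ℂ) *
      (-1 : ℂ) ^ (Finset.univ.filter (fun j => (Fin.snoc τ false : Fin (n + 1) → Bool) j = false)).card *
      (∏ j : Fin (n + 1), ((if (Fin.snoc τ false : Fin (n + 1) → Bool) ((permExtLast σ) j) = true then z ((permExtLast σ) j) else (z ((permExtLast σ) j))⁻¹) + s)) *
      ∏ j : Fin (n + 1),
        ((∏ k ∈ Finset.Icc 1 (x j - 1), (α k + (1 - α k * Function.update γ (m + 1) (z (Fin.last n)) k) * (if (Fin.snoc τ false : Fin (n + 1) → Bool) ((permExtLast σ) j) = true then z ((permExtLast σ) j) else (z ((permExtLast σ) j))⁻¹))) *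
         (∏ k ∈ Finset.Icc (x j + 1) (m + 1), (1 - Function.update γ (m + 1) (z (Fin.last n)) k * (if (Fin.snoc τ false : Fin (n + 1) → Bool) ((permExtLast σ) j) = true then z ((permExtLast σ) j) else (z ((permExtLast σ) j))⁻¹))) *
         (∏ k ∈ Finset.Icc 1 (m + 1), (1 - Function.update γ (m + 1) (z (Fin.last n)) k * (if (Fin.snoc τ false : Fin (n + 1) → Bool) ((permExtLast σ) j) = true then (z ((permExtLast σ) j))⁻¹ else z ((permExtLast σ) j))))))
        = ∑ τ : Fin n → Bool, ∑ σ : Equiv.Perm (Fin n), (-((z (Fin.last n))⁻¹ + s) * (1 - z (Fin.last n) * z (Fin.last n)) *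
      (∏ k ∈ Finset.Icc 1 m, (α k + (1 - α k * γ k) * (z (Fin.last n))⁻¹)) *
      (∏ k ∈ Finset.Icc 1 m, (1 - γ k * z (Fin.last n))) *
      ∏ j : Fin n, ((1 - z (Fin.last n) * z j.castSucc) * (1 - z (Fin.last n) * (z j.castSucc)⁻¹))) * (((Equiv.Perm.sign σ : ℤ) : ℂ) *
      (-1 : ℂ) ^ (Finset.univ.filter (fun j => τ j = false)).card *
      (∏ j : Fin n, ((if τ (σ j) = true then z (σ j).castSucc else (z (σ j).castSucc)⁻¹) + s)) *
      ∏ j : Fin n,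
        ((∏ k ∈ Finset.Icc 1 (x j.castSucc - 1), (α k + (1 - α k * γ k) * (if τ (σ j) = true then z (σ j).castSucc else (z (σ j).castSucc)⁻¹))) *
         (∏ k ∈ Finset.Icc (x j.castSucc + 1) m, (1 - γ k * (if τ (σ j) = true then z (σ j).castSucc else (z (σ j).castSucc)⁻¹))) *
         (∏ k ∈ Finset.Icc 1 m, (1 - γ k * (if τ (σ j) = true then (z (σ j).castSucc)⁻¹ else z (σ j).castSucc))))) :=
      Finset.sum_congr rfl fun τ _ => Finset.sum_congr rfl fun σ _ => hterm σ τ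
    rw [step3]
    simp only [← Finset.mul_sum]
    congr 1
    exact Finset.sum_comm
  simp only [FII]
  rw [key]
  have hwL0 : w (Fin.last n) ≠ 0 := fun h => hZ0 (by rw [← hw (Fin.last n), h]; simp)
  have hQfac : ∀ j k : Fin (n + 1), j < k →
      (1 - z j * z k) * (z j * (z k)⁻¹ - 1) ≠ 0 := fun j k hjk =>
    mul_ne_zero (sub_ne_zero.mpr fun h => hzz j k hjk h.symm)
      (sub_ne_zero.mpr fun h => hzne j k hjk ((mul_inv_eq_one₀ (hz0 k)).mp h))
  have hDz0 : (∏ j : Fin n, (1 - z j.castSucc ^ 2)) ≠ 0 :=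
    Finset.prod_ne_zero_iff.mpr fun j _ => sub_ne_zero.mpr fun h => hz1 j.castSucc h.symm
  have hQ0 : (∏ j : Fin n, ∏ k ∈ Finset.Ioi j,
      (1 - z j.castSucc * z k.castSucc) * (z j.castSucc * (z k.castSucc)⁻¹ - 1)) ≠ 0 :=
    Finset.prod_ne_zero_iff.mpr fun j _ => Finset.prod_ne_zero_iff.mpr fun k hk =>
      hQfac j.castSucc k.castSucc (Fin.castSucc_lt_castSucc_iff.mpr (Finset.mem_Ioi.mp hk))
  have hQt : (∏ j : Fin n,
      (1 - z j.castSucc * z (Fin.last n)) * (z j.castSucc * (z (Fin.last n))⁻¹ - 1)) ≠ 0 :=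
    Finset.prod_ne_zero_iff.mpr fun j _ => hQfac j.castSucc (Fin.last n) (Fin.castSucc_lt_last j)
  have h1Z : (1 : ℂ) - z (Fin.last n) ^ 2 ≠ 0 := sub_ne_zero.mpr fun h => hz1 (Fin.last n) h.symm
  have hNum1 : (∏ j : Fin (n + 1), w j * (1 - s * z j))
      = (∏ j : Fin n, w j.castSucc * (1 - s * z j.castSucc)) *
        (w (Fin.last n) * (1 - s * z (Fin.last n))) := Fin.prod_univ_castSucc _
  have hDzsplit : (∏ j : Fin (n + 1), (1 - z j ^ 2))
      = (∏ j : Fin n, (1 - z j.castSucc ^ 2)) * (1 - z (Fin.last n) ^ 2) := Fin.prod_univ_castSucc _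
  have hTsplit : (∏ j : Fin (n + 1), (t * z (Fin.last n) * z j + 1))
      = (∏ j : Fin n, (t * z (Fin.last n) * z j.castSucc + 1)) * (t * z (Fin.last n) * z (Fin.last n) + 1) :=
    Fin.prod_univ_castSucc _
  have hP2split : (∏ j : Fin (n + 1), ∏ k ∈ Finset.Ioi j,
        (1 + t * z j * z k) * (1 + t * z j * (z k)⁻¹))
      = (∏ j : Fin n, ∏ k ∈ Finset.Ioi j,
          (1 + t * z j.castSucc * z k.castSucc) * (1 + t * z j.castSucc * (z k.castSucc)⁻¹)) *
        ∏ j : Fin n, (1 + t * z j.castSucc * z (Fin.last n)) * (1 + t * z j.castSucc * (z (Fin.last n))⁻¹) :=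
    prod2_split _
  have hQsplit : (∏ j : Fin (n + 1), ∏ k ∈ Finset.Ioi j,
        (1 - z j * z k) * (z j * (z k)⁻¹ - 1))
      = (∏ j : Fin n, ∏ k ∈ Finset.Ioi j,
          (1 - z j.castSucc * z k.castSucc) * (z j.castSucc * (z k.castSucc)⁻¹ - 1)) *
        ∏ j : Fin n, (1 - z j.castSucc * z (Fin.last n)) * (z j.castSucc * (z (Fin.last n))⁻¹ - 1) :=
    prod2_split _
  have hmain : (∏ j : Fin n, (1 + t * z j.castSucc * z (Fin.last n)) * (1 + t * z j.castSucc * (z (Fin.last n))⁻¹)) *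
        (∏ j : Fin n, (1 - z (Fin.last n) * z j.castSucc) * (1 - z (Fin.last n) * (z j.castSucc)⁻¹))
      = (∏ j : Fin n, (t * z (Fin.last n) * z j.castSucc + 1)) *
        (∏ j : Fin n, (t + z (Fin.last n) * (z j.castSucc)⁻¹)) *
        ∏ j : Fin n, (1 - z j.castSucc * z (Fin.last n)) * (z j.castSucc * (z (Fin.last n))⁻¹ - 1) := by
    rw [← Finset.prod_mul_distrib, ← Finset.prod_mul_distrib, ← Finset.prod_mul_distrib]
    refine Finset.prod_congr rfl fun j _ => ?_
    have h0 := hz0 j.castSucc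
    field_simp
    ring
  have hAcomm : (∏ k ∈ Finset.Icc 1 m, (α k + (1 - α k * γ k) * (z (Fin.last n))⁻¹))
      = ∏ j ∈ Finset.Icc 1 m, ((1 - α j * γ j) * (z (Fin.last n))⁻¹ + α j) :=
    Finset.prod_congr rfl fun _ _ => add_comm _ _
  have hscal : w (Fin.last n) * (1 - s * z (Fin.last n)) * ((z (Fin.last n))⁻¹ + s)
      = (w (Fin.last n))⁻¹ * (t * z (Fin.last n) * z (Fin.last n) + 1) := by
    have hw2 := hw (Fin.last n)
    field_simp
    linear_combination (1 - s ^ 2 * z (Fin.last n) ^ 2) * hw2 - z (Fin.last n) ^ 3 * hs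
  rw [hNum1, hDzsplit, hTsplit, hP2split, hQsplit, pow_succ]
  set N0 := ∏ j : Fin n, w j.castSucc * (1 - s * z j.castSucc) with hsN0
  set P0 := ∏ j : Fin n, ∏ k ∈ Finset.Ioi j,
    (1 + t * z j.castSucc * z k.castSucc) * (1 + t * z j.castSucc * (z k.castSucc)⁻¹) with hsP0
  set D0 := ∏ j : Fin n, (1 - z j.castSucc ^ 2) with hsD0
  set Q0 := ∏ j : Fin n, ∏ k ∈ Finset.Ioi j,
    (1 - z j.castSucc * z k.castSucc) * (z j.castSucc * (z k.castSucc)⁻¹ - 1) with hsQ0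
  set Pt := ∏ j : Fin n,
    (1 + t * z j.castSucc * z (Fin.last n)) * (1 + t * z j.castSucc * (z (Fin.last n))⁻¹) with hsPt
  set Qt := ∏ j : Fin n,
    (1 - z j.castSucc * z (Fin.last n)) * (z j.castSucc * (z (Fin.last n))⁻¹ - 1) with hsQt
  set Cp := ∏ j : Fin n,
    (1 - z (Fin.last n) * z j.castSucc) * (1 - z (Fin.last n) * (z j.castSucc)⁻¹) with hsCp
  set T0 := ∏ j : Fin n, (t * z (Fin.last n) * z j.castSucc + 1) with hsT0
  set Pti := ∏ j : Fin n, (t + z (Fin.last n) * (z j.castSucc)⁻¹) with hsPti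
  set Aa := ∏ k ∈ Finset.Icc 1 m, (α k + (1 - α k * γ k) * (z (Fin.last n))⁻¹) with hsAa
  set Ab := ∏ j ∈ Finset.Icc 1 m, ((1 - α j * γ j) * (z (Fin.last n))⁻¹ + α j) with hsAb
  set Bg := ∏ j ∈ Finset.Icc 1 m, (1 - γ j * z (Fin.last n)) with hsBg
  set S0 := ∑ σ : Equiv.Perm (Fin n), ∑ τ : Fin n → Bool, ((Equiv.Perm.sign σ : ℤ) : ℂ) *
      (-1 : ℂ) ^ (Finset.univ.filter (fun j => τ j = false)).card *
      (∏ j : Fin n, ((if τ (σ j) = true then z (σ j).castSucc else (z (σ j).castSucc)⁻¹) + s)) *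
      ∏ j : Fin n,
        ((∏ k ∈ Finset.Icc 1 (x j.castSucc - 1), (α k + (1 - α k * γ k) * (if τ (σ j) = true then z (σ j).castSucc else (z (σ j).castSucc)⁻¹))) *
         (∏ k ∈ Finset.Icc (x j.castSucc + 1) m, (1 - γ k * (if τ (σ j) = true then z (σ j).castSucc else (z (σ j).castSucc)⁻¹))) *
         (∏ k ∈ Finset.Icc 1 m, (1 - γ k * (if τ (σ j) = true then (z (σ j).castSucc)⁻¹ else z (σ j).castSucc)))) with hsS0
  have hB : ((-1 : ℂ) ^ n * -1 * (D0 * (1 - z (Fin.last n) ^ 2)) * (Q0 * Qt)) ≠ 0 :=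
    mul_ne_zero (mul_ne_zero (mul_ne_zero (pow_ne_zero n (neg_ne_zero.mpr one_ne_zero))
      (neg_ne_zero.mpr one_ne_zero)) (mul_ne_zero hDz0 h1Z)) (mul_ne_zero hQ0 hQt)
  have hD : ((-1 : ℂ) ^ n * D0 * Q0) ≠ 0 :=
    mul_ne_zero (mul_ne_zero (pow_ne_zero n (neg_ne_zero.mpr one_ne_zero)) hDz0) hQ0
  rw [div_mul_eq_mul_div, div_mul_eq_mul_div, ← mul_div_assoc, div_eq_div_iff hB hD]
  linear_combination
    (-(S0 * (N0 * P0 * (-1 : ℂ) ^ n * D0 * Q0 * Bg * (1 - z (Fin.last n) * z (Fin.last n))) * Aa *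
        (w (Fin.last n) * (1 - s * z (Fin.last n)) * ((z (Fin.last n))⁻¹ + s)))) * hmain +
    (-(S0 * (N0 * P0 * (-1 : ℂ) ^ n * D0 * Q0 * Bg * (1 - z (Fin.last n) * z (Fin.last n))) *
        (w (Fin.last n) * (1 - s * z (Fin.last n)) * ((z (Fin.last n))⁻¹ + s)) * (T0 * Pti * Qt))) * hAcomm +
    (-(S0 * (N0 * P0 * (-1 : ℂ) ^ n * D0 * Q0 * Bg * (1 - z (Fin.last n) * z (Fin.last n))) * (T0 * Pti * Qt) * Ab)) *
      hscal
end

section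
/- Fix integers M ≥ N ≥ 1, parameters t, α₀,…,α_M, γ₀,…,γ_M ∈ ℂ with t ≠ 0, and integers 1 ≤ x̄₁ < ⋯ < x̄_N = M. For nonzero z₁,…,z_N ∈ ℂ with t²z_j² ≠ 1 for all j, t²z_jz_k ≠ 1 and z_j ≠ z_k for all j < k, define F̄^I_{M,N}(z₁,…,z_N; γ₁,…,γ_M; x̄₁,…,x̄_N) = [ t^{N(M-N)+N(N+1)/2} ∏_{j=1}^{N}(1+tz_j²) ∏_{1≤j<k≤N}(1+tz_jz_k)(1+tz_j^{-1}z_k) ] / [ (−1)^N ∏_{j=1}^{N}(1−t²z_j²) ∏_{1≤j<k≤N}(1−t²z_jz_k)(1−z_j^{-1}z_k) ] × Σ_{σ ∈ S_N} Σ_{τ ∈ {±1}^N} sgn(σ) (−1)^{#{j : τ_j = −1}} ∏_{j=1}^{N} [ ∏_{k=0}^{x̄_j-1}(−α_k + (1-α_kγ_k)(t z_{σ(j)})^{τ_{σ(j)}}) ] [ ∏_{k=x̄_j+1}^{M}(1 + γ_k (t z_{σ(j)})^{τ_{σ(j)}}) ] [ ∏_{k=1}^{M}(1 + γ_k (t z_{σ(j)})^{-τ_{σ(j)}})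 ]. Then, with γ_M specialized to γ_M = −(t z_N)^{-1}, F̄^I_{M,N}(z₁,…,z_N; γ₁,…,γ_{M-1}, −(t z_N)^{-1}; x̄₁,…,x̄_N) = ∏_{j=1}^{N}(1 + (t z_N z_j)^{-1}) · ∏_{j=1}^{N-1}(1 + z_j (t z_N)^{-1}) · ∏_{j=0}^{M-1}(t(1-α_jγ_j) z_N − α_j) · ∏_{j=1}^{M-1}(t + γ_j z_N^{-1}) · F̄^I_{M-1,N-1}(z₁,…,z_{N-1}; γ₁,…,γ_{M-1}; x̄₁,…,x̄_{N-1}), where F̄^I_{M-1,0} is interpreted as 1. -/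
open Finset

/-- The reindexed explicit sum formula `F̄^I_{M,N}` (equation (121) in the Appendix of the
paper): the product of the type I dual prefactor and the generalized symplectic Schur
function `sp_{λ̄}(tz₁,…,tz_N | −α | −γ)` with `λ̄_j = x̄_{N-j+1} - N + j - 1`.  Variables `z`
and hole positions `x̄` are 0-indexed; parameter families `α, γ` are functions on `ℕ`
(indices `0,…,M` are used).  The sign choice `τ` is encoded by booleans: `τ j = true`
stands for `τ_j = +1`, `τ j = false` for `τ_j = -1`. -/
noncomputable def FIbar (M : ℕ) (t : ℂ) (α γ : ℕ → ℂ) {N : ℕ} (x : Fin N → ℕ)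
    (z : Fin N → ℂ) : ℂ :=
  (t ^ (N * (M - N) + N * (N + 1) / 2) * (∏ j, (1 + t * z j ^ 2)) *
      ∏ j, ∏ k ∈ Ioi j, (1 + t * z j * z k) * (1 + t * (z j)⁻¹ * z k)) /
  ((-1 : ℂ) ^ N * (∏ j, (1 - t ^ 2 * z j ^ 2)) *
      ∏ j, ∏ k ∈ Ioi j, (1 - t ^ 2 * z j * z k) * (1 - (z j)⁻¹ * z k)) *
  ∑ σ : Equiv.Perm (Fin N), ∑ τ : Fin N → Bool,
    ((Equiv.Perm.sign σ : ℤ) : ℂ) *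
    (-1 : ℂ) ^ (Finset.univ.filter (fun j => τ j = false)).card *
    ∏ j,
      ((∏ k ∈ Finset.range (x j),
          (-α k + (1 - α k * γ k) * (if τ (σ j) then t * z (σ j) else (t * z (σ j))⁻¹))) *
       (∏ k ∈ Finset.Icc (x j + 1) M,
          (1 + γ k * (if τ (σ j) then t * z (σ j) else (t * z (σ j))⁻¹))) *
       (∏ k ∈ Finset.Icc 1 M,
          (1 + γ k * (if τ (σ j) then (t * z (σ j))⁻¹ else t * z (σ j)))))


/-- The generic summand of the `FIbar` double sum. -/
noncomputable def TTerm (M : ℕ) (t : ℂ) (α γ : ℕ → ℂ) {N : ℕ} (x : Fin N → ℕ)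
    (z : Fin N → ℂ) (σ : Equiv.Perm (Fin N)) (τ : Fin N → Bool) : ℂ :=
  ((Equiv.Perm.sign σ : ℤ) : ℂ) *
    (-1 : ℂ) ^ (Finset.univ.filter (fun j => τ j = false)).card *
    ∏ j,
      ((∏ k ∈ Finset.range (x j),
          (-α k + (1 - α k * γ k) * (if τ (σ j) then t * z (σ j) else (t * z (σ j))⁻¹))) *
       (∏ k ∈ Finset.Icc (x j + 1) M,
          (1 + γ k * (if τ (σ j) then t * z (σ j) else (t * z (σ j))⁻¹))) *
       (∏ k ∈ Finset.Icc 1 M,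
          (1 + γ k * (if τ (σ j) then (t * z (σ j))⁻¹ else t * z (σ j)))))

/-- Extend a permutation of `Fin n` to `Fin (n+1)` fixing the last element. -/
def permExt {n : ℕ} (σ : Equiv.Perm (Fin n)) : Equiv.Perm (Fin (n + 1)) :=
  σ.extendDomain (finSuccAboveEquiv (Fin.last n))

lemma finSuccAboveEquiv_last_coe {n : ℕ} (a : Fin n) :
    ((finSuccAboveEquiv (Fin.last n)) a : Fin (n + 1)) = a.castSucc := by
  simp [finSuccAboveEquiv_apply, Fin.succAbove_last]

lemma permExt_castSucc {n : ℕ} (σ : Equiv.Perm (Fin n)) (i : Fin n) :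
    permExt σ i.castSucc = (σ i).castSucc := by
  have h := Equiv.Perm.extendDomain_apply_image σ (finSuccAboveEquiv (Fin.last n)) i
  simpa [permExt, finSuccAboveEquiv_last_coe] using h

lemma permExt_last {n : ℕ} (σ : Equiv.Perm (Fin n)) :
    permExt σ (Fin.last n) = Fin.last n := by
  apply Equiv.Perm.extendDomain_apply_not_subtype
  simp

lemma sign_permExt {n : ℕ} (σ : Equiv.Perm (Fin n)) :
    Equiv.Perm.sign (permExt σ) = Equiv.Perm.sign σ :=
  Equiv.Perm.sign_extendDomain σ _

lemma permExt_injective {n : ℕ} : Function.Injective (permExt (n := n)) := by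
  intro a b hab
  apply Equiv.ext
  intro i
  have : permExt a i.castSucc = permExt b i.castSucc := by rw [hab]
  rw [permExt_castSucc, permExt_castSucc] at this
  exact Fin.castSucc_injective n this

/-- Restriction of a permutation of `Fin (n+1)` (fixing the last element) to `Fin n`. -/
def permDown {n : ℕ} (σ : Equiv.Perm (Fin (n + 1))) : Equiv.Perm (Fin n) :=
  if h : ∀ i : Fin (n + 1), i ≠ Fin.last n ↔ σ i ≠ Fin.last n then
    (Equiv.permCongr (finSuccAboveEquiv (Fin.last n))).symm (σ.subtypePerm (fun i => (h i).symm))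
  else 1

lemma permExt_permDown {n : ℕ} (σ : Equiv.Perm (Fin (n + 1))) (hσ : σ (Fin.last n) = Fin.last n) :
    permExt (permDown σ) = σ := by
  have h : ∀ i : Fin (n + 1), i ≠ Fin.last n ↔ σ i ≠ Fin.last n := by
    intro i
    constructor
    · intro hi hc
      exact hi (σ.injective (hc.trans hσ.symm))
    · intro hi hc
      exact hi (by rw [hc, hσ])
  rw [permDown, dif_pos h]
  set f := finSuccAboveEquiv (Fin.last n) with hf
  ext i
  induction i using Fin.lastCases with
  | last => rw [permExt_last, hσ]
  | cast i =>
    rw [permExt_castSucc]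
    have h1 : ((Equiv.permCongr f).symm (σ.subtypePerm (fun i => (h i).symm))) i = f.symm (σ.subtypePerm (fun i => (h i).symm) (f i)) := by
      simp [Equiv.permCongr_apply]
    rw [h1]
    have h2 : ∀ s : {x : Fin (n+1) // x ≠ Fin.last n}, (f.symm s).castSucc = (s : Fin (n+1)) := by
      intro s
      conv_rhs => rw [← f.apply_symm_apply s]
      rw [finSuccAboveEquiv_last_coe]
    rw [h2]
    have h3 : (σ.subtypePerm (fun i => (h i).symm) (f i) : Fin (n+1)) = σ (f i : Fin (n+1)) := rfl
    rw [h3, finSuccAboveEquiv_last_coe]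

/-- snoc equivalence for boolean tuples. -/
def snocEquivBool (n : ℕ) : (Fin n → Bool) × Bool ≃ (Fin (n + 1) → Bool) where
  toFun p := Fin.snoc p.1 p.2
  invFun τ := (fun i => τ i.castSucc, τ (Fin.last n))
  left_inv p := by
    ext i
    · simp [Fin.snoc_castSucc]
    · simp [Fin.snoc_last]
  right_inv τ := by
    funext i
    induction i using Fin.lastCases with
    | last => simp [Fin.snoc_last]
    | cast i => simp [Fin.snoc_castSucc]

lemma filter_snoc_false_card {n : ℕ} (τ₀ : Fin n → Bool) :
    (Finset.univ.filter (fun j : Fin (n + 1) => (Fin.snoc (α := fun _ => Bool) τ₀ true j) = false)).card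
      = (Finset.univ.filter (fun j => τ₀ j = false)).card := by
  have himg : (Finset.univ.filter (fun j : Fin (n + 1) => (Fin.snoc (α := fun _ => Bool) τ₀ true j) = false))
      = (Finset.univ.filter (fun j => τ₀ j = false)).map Fin.castSuccEmb := by
    ext k
    simp only [mem_filter, mem_univ, true_and, Finset.mem_map]
    induction k using Fin.lastCases with
    | last => simp [Fin.snoc_last, Fin.castSuccEmb]; intro a ha hc; exact absurd hc (Fin.castSucc_lt_last a).ne
    | cast i =>
      simp only [Fin.snoc_castSucc]
      constructor
      · intro hi; exact ⟨i, hi, rfl⟩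
      · rintro ⟨a, ha, hc⟩
        have : a = i := Fin.castSucc_injective n hc
        rwa [← this]
  rw [himg, Finset.card_map]

lemma upd_prod_range (m p : ℕ) (hp : p ≤ m + 1) (γ α : ℕ → ℂ) (c w : ℂ) :
    (∏ k ∈ Finset.range p, (-α k + (1 - α k * Function.update γ (m+1) c k) * w))
      = ∏ k ∈ Finset.range p, (-α k + (1 - α k * γ k) * w) :=
  Finset.prod_congr rfl fun k hk => by
    rw [Function.update_of_ne (by simp only [Finset.mem_range] at hk; omega)]

lemma upd_prod_Icc (m a b : ℕ) (hb : b ≤ m) (γ : ℕ → ℂ) (c w : ℂ) :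
    (∏ k ∈ Finset.Icc a b, (1 + Function.update γ (m+1) c k * w))
      = ∏ k ∈ Finset.Icc a b, (1 + γ k * w) :=
  Finset.prod_congr rfl fun k hk => by
    rw [Function.update_of_ne (by simp only [Finset.mem_Icc] at hk; omega)]

lemma Psplit (m p : ℕ) (hp : p ≤ m) (γ α : ℕ → ℂ) (c w v : ℂ) :
    (∏ k ∈ Finset.range p, (-α k + (1 - α k * Function.update γ (m+1) c k) * w)) *
    (∏ k ∈ Finset.Icc (p+1) (m+1), (1 + Function.update γ (m+1) c k * w)) *
    (∏ k ∈ Finset.Icc 1 (m+1), (1 + Function.update γ (m+1) c k * v))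
    = ((∏ k ∈ Finset.range p, (-α k + (1 - α k * γ k) * w)) *
       (∏ k ∈ Finset.Icc (p+1) m, (1 + γ k * w)) *
       (∏ k ∈ Finset.Icc 1 m, (1 + γ k * v))) * ((1 + c * w) * (1 + c * v)) := by
  rw [Finset.prod_Icc_succ_top (by omega : p + 1 ≤ m + 1),
      Finset.prod_Icc_succ_top (by omega : 1 ≤ m + 1), Function.update_self,
      upd_prod_range m p (by omega), upd_prod_Icc m (p+1) m le_rfl,
      upd_prod_Icc m 1 m le_rfl]
  ring

lemma Psplit_last (m : ℕ) (γ α : ℕ → ℂ) (c w v : ℂ) :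
    (∏ k ∈ Finset.range (m+1), (-α k + (1 - α k * Function.update γ (m+1) c k) * w)) *
    (∏ k ∈ Finset.Icc (m+1+1) (m+1), (1 + Function.update γ (m+1) c k * w)) *
    (∏ k ∈ Finset.Icc 1 (m+1), (1 + Function.update γ (m+1) c k * v))
    = (∏ k ∈ Finset.range (m+1), (-α k + (1 - α k * γ k) * w)) *
      ((∏ k ∈ Finset.Icc 1 m, (1 + γ k * v)) * (1 + c * v)) := by
  rw [Finset.Icc_eq_empty (by omega), Finset.prod_empty,
      Finset.prod_Icc_succ_top (by omega : 1 ≤ m + 1), Function.update_self,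
      upd_prod_range m (m+1) le_rfl, upd_prod_Icc m 1 m le_rfl]
  ring
lemma TTerm_vanish (m n : ℕ) (t : ℂ) (α γ : ℕ → ℂ) (x : Fin (n+1) → ℕ) (hx : StrictMono x)
    (hxM : x (Fin.last n) = m + 1) (z : Fin (n+1) → ℂ) (htz : t * z (Fin.last n) ≠ 0)
    (σ : Equiv.Perm (Fin (n+1))) (τ : Fin (n+1) → Bool)
    (h : ¬(σ (Fin.last n) = Fin.last n ∧ τ (Fin.last n) = true)) :
    TTerm (m+1) t α (Function.update γ (m+1) (-(t * z (Fin.last n))⁻¹)) x z σ τ = 0 := by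
  set L := Fin.last n with hL
  set γ' := Function.update γ (m+1) (-(t * z L)⁻¹) with hγ'
  have hgMvan : (1 : ℂ) + γ' (m+1) * (t * z L) = 0 := by
    rw [hγ', Function.update_self]
    field_simp
    rw [div_self htz]; ring
  have hj₀ : σ (σ.symm L) = L := Equiv.apply_symm_apply σ L
  unfold TTerm
  rw [mul_eq_zero]
  right
  apply Finset.prod_eq_zero (Finset.mem_univ (σ.symm L))
  by_cases hτ : τ L = true
  · -- then σ L ≠ L, so σ.symm L ≠ L, second product vanishes
    have hσL : σ L ≠ L := fun hc => h ⟨hc, hτ⟩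
    have hne : σ.symm L ≠ L := fun hc => hσL ((Equiv.symm_apply_eq σ).mp hc).symm
    have hlt : σ.symm L < L := lt_of_le_of_ne (Fin.le_last _) hne
    have hxle : x (σ.symm L) + 1 ≤ m + 1 := by
      have := hx hlt
      omega
    rw [mul_eq_zero]
    left
    rw [mul_eq_zero]
    right
    apply Finset.prod_eq_zero (Finset.mem_Icc.mpr ⟨hxle, le_rfl⟩)
    rw [hj₀, hτ, if_pos rfl]
    exact hgMvan
  · rw [mul_eq_zero]
    right
    apply Finset.prod_eq_zero (Finset.mem_Icc.mpr ⟨(by omega : 1 ≤ m + 1), le_rfl⟩)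
    rw [hj₀, if_neg hτ]
    exact hgMvan

/-- The extracted constant factor in the Izergin–Korepin recursion. -/
noncomputable def EF (m n : ℕ) (t : ℂ) (α γ : ℕ → ℂ) (z : Fin (n+1) → ℂ) : ℂ :=
  (∏ k ∈ Finset.range (m+1), (-α k + (1 - α k * γ k) * (t * z (Fin.last n)))) *
  ((∏ k ∈ Finset.Icc 1 m, (1 + γ k * (t * z (Fin.last n))⁻¹)) *
   (1 + (-(t * z (Fin.last n))⁻¹) * (t * z (Fin.last n))⁻¹)) *
  ∏ j : Fin n, ((1 + (-(t * z (Fin.last n))⁻¹) * (t * z j.castSucc)) *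
                (1 + (-(t * z (Fin.last n))⁻¹) * (t * z j.castSucc)⁻¹))

lemma TTerm_ext (m n : ℕ) (t : ℂ) (α γ : ℕ → ℂ)
    (x : Fin (n+1) → ℕ) (hx : StrictMono x) (hxM : x (Fin.last n) = m+1)
    (z : Fin (n+1) → ℂ)
    (σ₀ : Equiv.Perm (Fin n)) (τ₀ : Fin n → Bool) :
    TTerm (m+1) t α (Function.update γ (m+1) (-(t * z (Fin.last n))⁻¹)) x z
        (permExt σ₀) (Fin.snoc (α := fun _ => Bool) τ₀ true)
      = EF m n t α γ z *
        TTerm m t α γ (fun j : Fin n => x j.castSucc) (fun j : Fin n => z j.castSucc) σ₀ τ₀ := by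
  set L := Fin.last n with hL
  set c : ℂ := -(t * z L)⁻¹ with hc
  unfold TTerm
  rw [sign_permExt, filter_snoc_false_card, Fin.prod_univ_castSucc]
  simp only [permExt_castSucc, permExt_last, Fin.snoc_castSucc, Fin.snoc_last, if_true]
  have hxlt : ∀ j : Fin n, x j.castSucc ≤ m := by
    intro j
    have := hx (Fin.castSucc_lt_last j)
    rw [hxM] at this
    omega
  have hF : ∀ j ∈ (Finset.univ : Finset (Fin n)),
      ((∏ k ∈ Finset.range (x j.castSucc),
          (-α k + (1 - α k * Function.update γ (m+1) c k) *
            (if τ₀ (σ₀ j) then t * z (σ₀ j).castSucc else (t * z (σ₀ j).castSucc)⁻¹))) *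
       (∏ k ∈ Finset.Icc (x j.castSucc + 1) (m+1),
          (1 + Function.update γ (m+1) c k *
            (if τ₀ (σ₀ j) then t * z (σ₀ j).castSucc else (t * z (σ₀ j).castSucc)⁻¹))) *
       (∏ k ∈ Finset.Icc 1 (m+1),
          (1 + Function.update γ (m+1) c k *
            (if τ₀ (σ₀ j) then (t * z (σ₀ j).castSucc)⁻¹ else t * z (σ₀ j).castSucc))))
      = (((∏ k ∈ Finset.range (x j.castSucc),
          (-α k + (1 - α k * γ k) *
            (if τ₀ (σ₀ j) then t * z (σ₀ j).castSucc else (t * z (σ₀ j).castSucc)⁻¹))) *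
       (∏ k ∈ Finset.Icc (x j.castSucc + 1) m,
          (1 + γ k *
            (if τ₀ (σ₀ j) then t * z (σ₀ j).castSucc else (t * z (σ₀ j).castSucc)⁻¹))) *
       (∏ k ∈ Finset.Icc 1 m,
          (1 + γ k *
            (if τ₀ (σ₀ j) then (t * z (σ₀ j).castSucc)⁻¹ else t * z (σ₀ j).castSucc)))) *
        ((1 + c * (t * z (σ₀ j).castSucc)) * (1 + c * (t * z (σ₀ j).castSucc)⁻¹))) := by
    intro j _
    rw [Psplit m (x j.castSucc) (hxlt j) γ α c _ _]
    congr 1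
    cases hb : τ₀ (σ₀ j) <;> simp only [if_pos, if_neg, Bool.false_eq_true, if_false, if_true] <;> ring
  rw [Finset.prod_congr rfl hF, Finset.prod_mul_distrib]
  rw [Equiv.prod_comp σ₀
    (fun i : Fin n => (1 + c * (t * z i.castSucc)) * (1 + c * (t * z i.castSucc)⁻¹))]
  rw [hxM, Psplit_last m γ α c _ _]
  rw [EF]
  ring

lemma SS_split (m n : ℕ) (t : ℂ) (α γ : ℕ → ℂ)
    (x : Fin (n+1) → ℕ) (hx : StrictMono x) (hxM : x (Fin.last n) = m+1)
    (z : Fin (n+1) → ℂ) (htz : t * z (Fin.last n) ≠ 0) :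
    (∑ σ : Equiv.Perm (Fin (n+1)), ∑ τ : Fin (n+1) → Bool,
        TTerm (m+1) t α (Function.update γ (m+1) (-(t * z (Fin.last n))⁻¹)) x z σ τ)
      = EF m n t α γ z *
        ∑ σ₀ : Equiv.Perm (Fin n), ∑ τ₀ : Fin n → Bool,
          TTerm m t α γ (fun j : Fin n => x j.castSucc) (fun j : Fin n => z j.castSucc) σ₀ τ₀ := by
  set γ' := Function.update γ (m+1) (-(t * z (Fin.last n))⁻¹) with hγ'
  have step1 : ∀ σ : Equiv.Perm (Fin (n+1)),
      (∑ τ : Fin (n+1) → Bool, TTerm (m+1) t α γ' x z σ τ)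
        = ∑ τ₀ : Fin n → Bool, TTerm (m+1) t α γ' x z σ (Fin.snoc τ₀ true) := by
    intro σ
    rw [← Equiv.sum_comp (snocEquivBool n) (fun τ => TTerm (m+1) t α γ' x z σ τ)]
    rw [Fintype.sum_prod_type]
    refine Finset.sum_congr rfl fun τ₀ _ => ?_
    rw [Fintype.sum_bool]
    have h0 : TTerm (m+1) t α γ' x z σ (snocEquivBool n (τ₀, false)) = 0 := by
      apply TTerm_vanish m n t α γ x hx hxM z htz
      rintro ⟨-, hτ⟩
      have : (Fin.snoc (α := fun _ => Bool) τ₀ false) (Fin.last n) = false := Fin.snoc_last _ _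
      rw [show (snocEquivBool n (τ₀, false)) = Fin.snoc (α := fun _ => Bool) τ₀ false from rfl] at hτ
      rw [hτ] at this
      simp at this
    rw [h0, add_zero]
    rfl
  simp only [step1]
  rw [← Finset.sum_filter_add_sum_filter_not Finset.univ
    (fun σ : Equiv.Perm (Fin (n+1)) => σ (Fin.last n) = Fin.last n)]
  have h2 : ∑ σ ∈ Finset.univ.filter
      (fun σ : Equiv.Perm (Fin (n+1)) => ¬ σ (Fin.last n) = Fin.last n),
      ∑ τ₀ : Fin n → Bool, TTerm (m+1) t α γ' x z σ (Fin.snoc τ₀ true) = 0 := by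
    refine Finset.sum_eq_zero fun σ hσ => Finset.sum_eq_zero fun τ₀ _ => ?_
    rw [Finset.mem_filter] at hσ
    apply TTerm_vanish m n t α γ x hx hxM z htz
    rintro ⟨hc, -⟩
    exact hσ.2 hc
  rw [h2, add_zero]
  have h3 : ∑ σ ∈ Finset.univ.filter
      (fun σ : Equiv.Perm (Fin (n+1)) => σ (Fin.last n) = Fin.last n),
      ∑ τ₀ : Fin n → Bool, TTerm (m+1) t α γ' x z σ (Fin.snoc τ₀ true)
      = ∑ σ₀ : Equiv.Perm (Fin n), ∑ τ₀ : Fin n → Bool,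
          TTerm (m+1) t α γ' x z (permExt σ₀) (Fin.snoc τ₀ true) := by
    refine Finset.sum_nbij' (fun σ => permDown σ) (fun σ₀ => permExt σ₀) ?_ ?_ ?_ ?_ ?_
    · intro σ hσ; exact Finset.mem_univ _
    · intro σ₀ _
      rw [Finset.mem_filter]
      exact ⟨Finset.mem_univ _, permExt_last σ₀⟩
    · intro σ hσ
      rw [Finset.mem_filter] at hσ
      exact permExt_permDown σ hσ.2
    · intro σ₀ _
      apply permExt_injective
      exact permExt_permDown _ (permExt_last σ₀)
    · intro σ hσ
      rw [Finset.mem_filter] at hσ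
      rw [permExt_permDown σ hσ.2]
  rw [h3]
  rw [Finset.mul_sum]
  refine Finset.sum_congr rfl fun σ₀ _ => ?_
  rw [Finset.mul_sum]
  refine Finset.sum_congr rfl fun τ₀ _ => ?_
  exact TTerm_ext m n t α γ x hx hxM z σ₀ τ₀

lemma prod_Ioi_split {n : ℕ} (F : Fin (n+1) → Fin (n+1) → ℂ) :
    (∏ j : Fin (n+1), ∏ k ∈ Ioi j, F j k)
      = (∏ j : Fin n, ∏ k ∈ Ioi j, F j.castSucc k.castSucc) *
        ∏ j : Fin n, F j.castSucc (Fin.last n) := by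
  rw [Fin.prod_univ_castSucc]
  have hlast : ∏ k ∈ Ioi (Fin.last n), F (Fin.last n) k = 1 :=
    Finset.prod_eq_one fun k hk => absurd (Finset.mem_Ioi.mp hk) (not_lt.mpr (Fin.le_last k))
  rw [hlast, mul_one, ← Finset.prod_mul_distrib]
  refine Finset.prod_congr rfl fun j _ => ?_
  have hins : Ioi (Fin.castSucc j) = insert (Fin.last n) ((Ioi j).map Fin.castSuccEmb) := by
    ext k
    induction k using Fin.lastCases with
    | last => simp [Fin.castSucc_lt_last]
    | cast i =>
      simp only [Finset.mem_Ioi, Finset.mem_insert, Finset.mem_map]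
      constructor
      · intro hk
        right
        exact ⟨i, Fin.castSucc_lt_castSucc_iff.mp hk, rfl⟩
      · rintro (hc | ⟨a, ha, hc⟩)
        · exact absurd hc.symm (Fin.castSucc_lt_last i).ne'
        · have : a = i := Fin.castSucc_injective n hc
          subst this
          exact Fin.castSucc_lt_castSucc_iff.mpr ha
  have hnotmem : Fin.last n ∉ (Ioi j).map Fin.castSuccEmb := by
    simp only [Finset.mem_map]
    rintro ⟨a, -, hc⟩
    exact absurd hc (Fin.castSucc_lt_last a).ne
  rw [hins, Finset.prod_insert hnotmem, Finset.prod_map, mul_comm]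
  rfl

lemma key_abstract (t Z : ℂ) (ht : t ≠ 0) (hZ : Z ≠ 0)
    (An Bn Cn Dn R1 Q3 Pb Pd Ppair C1 C2 : ℂ) (m en nn : ℕ)
    (hCn : Cn ≠ 0) (hDn : Dn ≠ 0) (hcL : 1 - t^2*Z^2 ≠ 0) (hPd : Pd ≠ 0)
    (hP : Pb * Ppair = (C1 * C2) * Pd) :
    (t^((m+1) + en) * (An * (1 + t*Z^2)) * (Bn * Pb)) /
      ((-1:ℂ)^(nn+1) * (Cn * (1 - t^2*Z^2)) * (Dn * Pd)) *
      ((R1 * (Q3 * (1 + (-(t*Z)⁻¹) * (t*Z)⁻¹))) * Ppair)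
    = (C1 * (1 + (t*Z*Z)⁻¹)) * C2 * R1 * (t^m * Q3) *
      ((t^en * An * Bn) / ((-1:ℂ)^nn * Cn * Dn)) := by
  have hm1 : ((-1:ℂ))^nn ≠ 0 := pow_ne_zero _ (by norm_num)
  have hden1 : ((-1:ℂ)^(nn+1) * (Cn * (1 - t^2*Z^2)) * (Dn * Pd)) ≠ 0 := by
    apply mul_ne_zero (mul_ne_zero (pow_ne_zero _ (by norm_num)) (mul_ne_zero hCn hcL))
    exact mul_ne_zero hDn hPd
  have hden2 : ((-1:ℂ)^nn * Cn * Dn) ≠ 0 := mul_ne_zero (mul_ne_zero hm1 hCn) hDn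
  rw [div_mul_eq_mul_div, mul_div_assoc', div_eq_div_iff hden1 hden2]
  have hAE : (t^((m+1) + en) * (An * (1 + t*Z^2)) * (Bn * Pb)) *
      ((R1 * (Q3 * (1 + (-(t*Z)⁻¹) * (t*Z)⁻¹))) * Ppair)
      = t^((m+1)+en) * An * (1 + t*Z^2) * Bn * R1 * Q3 *
        (1 + (-(t*Z)⁻¹) * (t*Z)⁻¹) * ((C1 * C2) * Pd) := by
    linear_combination (t^((m+1)+en) * An * (1 + t*Z^2) * Bn * R1 * Q3 *
      (1 + (-(t*Z)⁻¹) * (t*Z)⁻¹)) * hP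
  rw [hAE]
  field_simp
  ring

lemma perj (t a Z : ℂ) (ht : t ≠ 0) (ha : a ≠ 0) (hZ : Z ≠ 0) :
    ((1 + t * a * Z) * (1 + t * a⁻¹ * Z)) *
      ((1 + (-(t * Z)⁻¹) * (t * a)) * (1 + (-(t * Z)⁻¹) * (t * a)⁻¹))
      = ((1 + (t * Z * a)⁻¹) * (1 + a * (t * Z)⁻¹)) * ((1 - t^2 * a * Z) * (1 - a⁻¹ * Z)) := by
  have e1 : t * t⁻¹ = 1 := mul_inv_cancel₀ ht
  have I1 : (1 + t * a * Z) * (1 + (-(t * Z)⁻¹) * (t * a)⁻¹)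
      = -t⁻¹ * ((1 + (t * Z * a)⁻¹) * (1 - t^2 * a * Z)) := by field_simp; ring
  have I2 : (1 + t * a⁻¹ * Z) * (1 + (-(t * Z)⁻¹) * (t * a))
      = -t * ((1 + a * (t * Z)⁻¹) * (1 - a⁻¹ * Z)) := by field_simp; ring
  linear_combination ((1 + t * a⁻¹ * Z) * (1 + (-(t * Z)⁻¹) * (t * a))) * I1 +
    (-(t⁻¹ * ((1 + (t * Z * a)⁻¹) * (1 - t^2 * a * Z)))) * I2 +
    (((1 + (t * Z * a)⁻¹) * (1 - t^2 * a * Z)) * ((1 + a * (t * Z)⁻¹) * (1 - a⁻¹ * Z))) * e1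

lemma FIbar_eq (M : ℕ) (t : ℂ) (α γ : ℕ → ℂ) {N : ℕ} (x : Fin N → ℕ) (z : Fin N → ℂ) :
    FIbar M t α γ x z =
      (t ^ (N * (M - N) + N * (N + 1) / 2) * (∏ j, (1 + t * z j ^ 2)) *
          ∏ j, ∏ k ∈ Ioi j, (1 + t * z j * z k) * (1 + t * (z j)⁻¹ * z k)) /
      ((-1 : ℂ) ^ N * (∏ j, (1 - t ^ 2 * z j ^ 2)) *
          ∏ j, ∏ k ∈ Ioi j, (1 - t ^ 2 * z j * z k) * (1 - (z j)⁻¹ * z k)) *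
      ∑ σ : Equiv.Perm (Fin N), ∑ τ : Fin N → Bool, TTerm M t α γ x z σ τ := rfl

/-- Izergin–Korepin recursion for the type I dual wavefunctions,
equation (66) / Proposition 4.6 Property (3): the specialization `γ_M = −(t z_N)⁻¹`
of `F̄^I_{M,N}` factorizes through `F̄^I_{M-1,N-1}`.  Here `M = m+1`, `N = n+1`, so
`F̄^I_{M-1,N-1}` is `FIbar m` on the first `n` variables/positions (interpreted as `1`
when `n = 0`). -/
theorem FIbar_IzerginKorepin_recursion (m n : ℕ) (hmn : n ≤ m) (t : ℂ) (ht : t ≠ 0)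
    (α γ : ℕ → ℂ)
    (x : Fin (n + 1) → ℕ) (hx : StrictMono x) (hx1 : ∀ j, 1 ≤ x j)
    (hxM : x (Fin.last n) = m + 1)
    (z : Fin (n + 1) → ℂ) (hz0 : ∀ j, z j ≠ 0)
    (hz1 : ∀ j, t ^ 2 * z j ^ 2 ≠ 1)
    (hzz : ∀ j k, j < k → t ^ 2 * z j * z k ≠ 1) (hzne : ∀ j k, j < k → z j ≠ z k) :
    FIbar (m + 1) t α (Function.update γ (m + 1) (-(t * z (Fin.last n))⁻¹)) x z
      = (∏ j, (1 + (t * z (Fin.last n) * z j)⁻¹)) *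
        (∏ j : Fin n, (1 + z j.castSucc * (t * z (Fin.last n))⁻¹)) *
        (∏ j ∈ Finset.range (m + 1), (t * (1 - α j * γ j) * z (Fin.last n) - α j)) *
        (∏ j ∈ Finset.Icc 1 m, (t + γ j * (z (Fin.last n))⁻¹)) *
        FIbar m t α γ (fun j : Fin n => x j.castSucc) (fun j : Fin n => z j.castSucc) := by
  have htzL : t * z (Fin.last n) ≠ 0 := mul_ne_zero ht (hz0 _)
  rw [FIbar_eq, FIbar_eq, SS_split m n t α γ x hx hxM z htzL]
  unfold EF
  beta_reduce
  -- exponent arithmetic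
  have hexpNat : (n + 1) * (m + 1 - (n + 1)) + (n + 1) * (n + 1 + 1) / 2
      = (m + 1) + (n * (m - n) + n * (n + 1) / 2) := by
    have h2 : (n+1)*(n+1+1) = n*(n+1) + 2*(n+1) := by ring
    have h3 : (n*(n+1) + 2*(n+1))/2 = n*(n+1)/2 + (n+1) :=
      Nat.add_mul_div_left _ _ (by norm_num)
    have h4 : (n+1) * (m+1-(n+1)) = n*(m-n) + (m-n) := by
      have h5 : m+1-(n+1) = m-n := by omega
      rw [h5]; ring
    rw [h2, h3, h4]
    omega
  rw [hexpNat]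
  -- split the double products
  have hsplitB : (∏ j : Fin (n+1), ∏ k ∈ Ioi j, (1 + t * z j * z k) * (1 + t * (z j)⁻¹ * z k))
      = (∏ j : Fin n, ∏ k ∈ Ioi j,
          (1 + t * z j.castSucc * z k.castSucc) * (1 + t * (z j.castSucc)⁻¹ * z k.castSucc)) *
        ∏ j : Fin n, (1 + t * z j.castSucc * z (Fin.last n)) *
          (1 + t * (z j.castSucc)⁻¹ * z (Fin.last n)) :=
    prod_Ioi_split _
  have hsplitD : (∏ j : Fin (n+1), ∏ k ∈ Ioi j,
        (1 - t^2 * z j * z k) * (1 - (z j)⁻¹ * z k))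
      = (∏ j : Fin n, ∏ k ∈ Ioi j,
          (1 - t^2 * z j.castSucc * z k.castSucc) * (1 - (z j.castSucc)⁻¹ * z k.castSucc)) *
        ∏ j : Fin n, (1 - t^2 * z j.castSucc * z (Fin.last n)) *
          (1 - (z j.castSucc)⁻¹ * z (Fin.last n)) :=
    prod_Ioi_split _
  rw [hsplitB, hsplitD]
  simp only [Fin.prod_univ_castSucc]
  -- rewrite the last two explicit products
  have hC3 : (∏ j ∈ Finset.range (m+1), (t * (1 - α j * γ j) * z (Fin.last n) - α j))
      = ∏ k ∈ Finset.range (m+1), (-α k + (1 - α k * γ k) * (t * z (Fin.last n))) :=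
    Finset.prod_congr rfl fun k _ => by ring
  have hC4 : (∏ j ∈ Finset.Icc 1 m, (t + γ j * (z (Fin.last n))⁻¹))
      = t^m * ∏ k ∈ Finset.Icc 1 m, (1 + γ k * (t * z (Fin.last n))⁻¹) := by
    have h1 : ∀ k ∈ Finset.Icc 1 m, (t + γ k * (z (Fin.last n))⁻¹)
        = t * (1 + γ k * (t * z (Fin.last n))⁻¹) := by
      intro k _
      have h2 : z (Fin.last n) ≠ 0 := hz0 _
      field_simp
    rw [Finset.prod_congr rfl h1, Finset.prod_mul_distrib, Finset.prod_const, Nat.card_Icc]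
    simp
  rw [hC3, hC4]
  -- nonvanishing facts
  have hCn : (∏ j : Fin n, (1 - t^2 * z j.castSucc ^ 2)) ≠ 0 :=
    Finset.prod_ne_zero_iff.mpr fun j _ => sub_ne_zero.mpr (Ne.symm (hz1 j.castSucc))
  have hDn : (∏ j : Fin n, ∏ k ∈ Ioi j,
      (1 - t^2 * z j.castSucc * z k.castSucc) * (1 - (z j.castSucc)⁻¹ * z k.castSucc)) ≠ 0 := by
    refine Finset.prod_ne_zero_iff.mpr fun j _ => Finset.prod_ne_zero_iff.mpr fun k hk => ?_
    have hlt : j.castSucc < k.castSucc :=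
      Fin.castSucc_lt_castSucc_iff.mpr (Finset.mem_Ioi.mp hk)
    refine mul_ne_zero (sub_ne_zero.mpr (Ne.symm (hzz _ _ hlt))) (sub_ne_zero.mpr ?_)
    intro hc
    exact hzne _ _ hlt ((inv_mul_eq_one₀ (hz0 j.castSucc)).mp hc.symm)
  have hPd : (∏ j : Fin n, (1 - t^2 * z j.castSucc * z (Fin.last n)) *
      (1 - (z j.castSucc)⁻¹ * z (Fin.last n))) ≠ 0 := by
    refine Finset.prod_ne_zero_iff.mpr fun j _ => ?_
    have hlt : j.castSucc < Fin.last n := Fin.castSucc_lt_last j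
    refine mul_ne_zero (sub_ne_zero.mpr (Ne.symm (hzz _ _ hlt))) (sub_ne_zero.mpr ?_)
    intro hc
    exact hzne _ _ hlt ((inv_mul_eq_one₀ (hz0 j.castSucc)).mp hc.symm)
  have hcL : (1 : ℂ) - t^2 * z (Fin.last n)^2 ≠ 0 :=
    sub_ne_zero.mpr (Ne.symm (hz1 (Fin.last n)))
  -- the product identity
  have hP : (∏ j : Fin n, (1 + t * z j.castSucc * z (Fin.last n)) *
        (1 + t * (z j.castSucc)⁻¹ * z (Fin.last n))) *
      (∏ j : Fin n, (1 + (-(t * z (Fin.last n))⁻¹) * (t * z j.castSucc)) *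
        (1 + (-(t * z (Fin.last n))⁻¹) * (t * z j.castSucc)⁻¹))
      = ((∏ j : Fin n, (1 + (t * z (Fin.last n) * z j.castSucc)⁻¹)) *
         (∏ j : Fin n, (1 + z j.castSucc * (t * z (Fin.last n))⁻¹))) *
        ∏ j : Fin n, (1 - t^2 * z j.castSucc * z (Fin.last n)) *
          (1 - (z j.castSucc)⁻¹ * z (Fin.last n)) := by
    rw [← Finset.prod_mul_distrib, ← Finset.prod_mul_distrib, ← Finset.prod_mul_distrib]
    refine Finset.prod_congr rfl fun j _ => ?_
    have h1 : z j.castSucc ≠ 0 := hz0 _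
    have h2 : z (Fin.last n) ≠ 0 := hz0 _
    exact perj t (z j.castSucc) (z (Fin.last n)) ht h1 h2
  have key := key_abstract t (z (Fin.last n)) ht (hz0 _)
    (∏ j : Fin n, (1 + t * z j.castSucc ^ 2))
    (∏ j : Fin n, ∏ k ∈ Ioi j,
      (1 + t * z j.castSucc * z k.castSucc) * (1 + t * (z j.castSucc)⁻¹ * z k.castSucc))
    (∏ j : Fin n, (1 - t^2 * z j.castSucc ^ 2))
    (∏ j : Fin n, ∏ k ∈ Ioi j,
      (1 - t^2 * z j.castSucc * z k.castSucc) * (1 - (z j.castSucc)⁻¹ * z k.castSucc))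
    (∏ k ∈ Finset.range (m+1), (-α k + (1 - α k * γ k) * (t * z (Fin.last n))))
    (∏ k ∈ Finset.Icc 1 m, (1 + γ k * (t * z (Fin.last n))⁻¹))
    (∏ j : Fin n, (1 + t * z j.castSucc * z (Fin.last n)) *
      (1 + t * (z j.castSucc)⁻¹ * z (Fin.last n)))
    (∏ j : Fin n, (1 - t^2 * z j.castSucc * z (Fin.last n)) *
      (1 - (z j.castSucc)⁻¹ * z (Fin.last n)))
    (∏ j : Fin n, (1 + (-(t * z (Fin.last n))⁻¹) * (t * z j.castSucc)) *
      (1 + (-(t * z (Fin.last n))⁻¹) * (t * z j.castSucc)⁻¹))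
    (∏ j : Fin n, (1 + (t * z (Fin.last n) * z j.castSucc)⁻¹))
    (∏ j : Fin n, (1 + z j.castSucc * (t * z (Fin.last n))⁻¹))
    m (n * (m - n) + n * (n + 1) / 2) n hCn hDn hcL hPd hP
  linear_combination (∑ σ₀ : Equiv.Perm (Fin n), ∑ τ₀ : Fin n → Bool,
    TTerm m t α γ (fun j : Fin n => x j.castSucc) (fun j : Fin n => z j.castSucc) σ₀ τ₀) * key
end
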